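/- Let f ∈ ℂ[x1,…,xn] be an irreducible homogeneous polynomial of degree d ≥ 1. Then the ED data isotropic locus is contained in the Minkowski sum of the dual variety and the isotropic points of V(f): DI(f) ⊆ V(f)* + (Q ∩ V(f)), where A + B = {a + b : a ∈ A, b ∈ B}. -/

import Mathlib

open MvPolynomial Pointwise

/-- Gradient of a multivariate polynomial at a point. -/
noncomputable def grad {n : ℕ} (f : MvPolynomial (Fin n) ℂ) (x : Fin n → ℂ) : Fin n → ℂ :=
  fun i => eval x (pderiv i f)

/-- Zariski closure: zero locus of the ideal of all polynomials vanishing on `S`. -/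
def zclosure {σ : Type} (S : Set (σ → ℂ)) : Set (σ → ℂ) :=
  {x | ∀ p : MvPolynomial σ ℂ, (∀ s ∈ S, eval s p = 0) → eval x p = 0}

/-- Zero locus `V(f)`. -/
def Vp {n : ℕ} (f : MvPolynomial (Fin n) ℂ) : Set (Fin n → ℂ) := {x | eval x f = 0}

/-- Regular locus. -/
def RegL {n : ℕ} (f : MvPolynomial (Fin n) ℂ) : Set (Fin n → ℂ) :=
  {x | eval x f = 0 ∧ grad f x ≠ 0}

/-- Singular locus. -/
def SingL {n : ℕ} (f : MvPolynomial (Fin n) ℂ) : Set (Fin n → ℂ) :=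
  {x | eval x f = 0 ∧ grad f x = 0}

/-- ED correspondence: Zariski closure of pairs (u,x), x regular, u - x ∈ ℂ·∇f(x),
encoded as functions on `Fin n ⊕ Fin n`. -/
def EDcorr {n : ℕ} (f : MvPolynomial (Fin n) ℂ) : Set ((Fin n ⊕ Fin n) → ℂ) :=
  zclosure {w | ∃ u x : Fin n → ℂ, w = Sum.elim u x ∧ x ∈ RegL f ∧ ∃ t : ℂ, u - x = t • grad f x}

/-- ED data singular locus. -/
def DS {n : ℕ} (f : MvPolynomial (Fin n) ℂ) : Set (Fin n → ℂ) :=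
  {u | ∃ x, Sum.elim u x ∈ EDcorr f ∧ x ∈ SingL f}

/-- Dual variety. -/
def dualV {n : ℕ} (f : MvPolynomial (Fin n) ℂ) : Set (Fin n → ℂ) :=
  zclosure {y | ∃ (t : ℂ) (x : Fin n → ℂ), x ∈ RegL f ∧ y = t • grad f x}

/-- Isotropic quadric. -/
def isoQ (n : ℕ) : Set (Fin n → ℂ) := {x | ∑ i, (x i) ^ 2 = 0}

/-- ED data isotropic locus. -/
def DI {n : ℕ} (f : MvPolynomial (Fin n) ℂ) : Set (Fin n → ℂ) :=
  {u | ∃ x, Sum.elim u x ∈ EDcorr f ∧ x ∈ isoQ n ∩ Vp f}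

/-- Zariski-closed sets. -/
def IsZClosed {σ : Type} (S : Set (σ → ℂ)) : Prop := zclosure S = S

/-- Irreducibility with respect to Zariski-closed sets. -/
def IsZIrreducible {σ : Type} (S : Set (σ → ℂ)) : Prop :=
  S.Nonempty ∧ ∀ C₁ C₂ : Set (σ → ℂ), IsZClosed C₁ → IsZClosed C₂ →
    S ⊆ C₁ ∪ C₂ → S ⊆ C₁ ∨ S ⊆ C₂

/-- `C` is an irreducible component of `S`. -/
def IsIrredComponentOf {σ : Type} (C S : Set (σ → ℂ)) : Prop :=
  C ⊆ S ∧ IsZClosed C ∧ IsZIrreducible C ∧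
    ∀ C' : Set (σ → ℂ), IsZClosed C' → IsZIrreducible C' → C ⊆ C' → C' ⊆ S → C' = C


/-- Theorem 2, inclusion (2): for an irreducible affine cone `V(f)` (with `f` irreducible
homogeneous of degree `d ≥ 1`), the ED data isotropic locus is contained in the Minkowski sum
of the dual variety and the isotropic points of `V(f)`. -/
lemma eval_bind1 {σ τ : Type} (w : τ → ℂ) (g : σ → MvPolynomial τ ℂ) (p : MvPolynomial σ ℂ) :
    eval w (bind₁ g p) = eval (fun i => eval w (g i)) p := by
  have key : ∀ (τ' : Type) (v : τ' → ℂ) (q : MvPolynomial τ' ℂ), aeval v q = eval v q := by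
    intro τ' v q
    rw [aeval_eq_eval₂Hom, Algebra.algebraMap_self]
    rfl
  have h := aeval_bind₁ (R := ℂ) w g p
  simp only [key] at h
  exact h

theorem DI_subset_dual_add_iso {n d : ℕ} (hd : 1 ≤ d) (f : MvPolynomial (Fin n) ℂ)
    (hf : f.IsHomogeneous d) (hirr : Irreducible f) :
    DI f ⊆ dualV f + (isoQ n ∩ Vp f) := by
  rintro u ⟨x, hE, hx⟩
  rw [Set.mem_add]
  refine ⟨u - x, ?_, x, hx, by abel⟩
  intro p hp
  have hq := hE (bind₁ (fun i => X (Sum.inl i) - X (Sum.inr i)) p) ?_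
  · exact (by simpa [eval_bind1] using hq : eval (fun i => u i - x i) p = 0)
  · rintro w ⟨u', x', rfl, hreg, t, ht⟩
    have : (fun i => Sum.elim u' x' (Sum.inl i) - Sum.elim u' x' (Sum.inr i)) = t • grad f x' := by
      funext i; simpa using congrFun ht i
    rw [eval_bind1]
    simpa [this] using hp _ ⟨t, x', hreg, this ▸ rfl⟩
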